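/- Let H be a complex Hilbert space, let T be a bounded linear operator on H with canonical polar decomposition T = U|T| and Duggal transform T^D = |T|U, and let λ ∈ [0,1]. Then ‖M_λ(T)‖ ≤ (‖λ|T| + (1-λ)|T^D|‖ + ‖λ|T*| + (1-λ)|(T^D)*|‖)/2 ≤ λ‖T‖ + (1-λ)‖T^D‖. In particular, for the mean transform T̂ = M_{1/2}(T) one has ‖T̂‖ ≤ (‖|T| + |T^D|‖ + ‖|T*| + |(T^D)*|‖)/4 ≤ ‖T‖. -/

import Mathlib

open ContinuousLinearMap Polynomial RCLike

section AuxStmt9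

variable {H : Type*} [NormedAddCommGroup H] [InnerProductSpace ℂ H] [CompleteSpace H]

local notation "⟪" x ", " y "⟫" => @inner ℂ _ _ x y

private lemma stmt9_aeval_intertwine (a b X : H →L[ℂ] H) (h : b * X = X * a) (p : ℝ[X]) :
    aeval b p * X = X * aeval a p := by
  have hpow : ∀ n : ℕ, b ^ n * X = X * a ^ n := by
    intro n
    induction n with
    | zero => simp
    | succ n ih => rw [pow_succ, pow_succ, mul_assoc, h, ← mul_assoc, ih, mul_assoc]
  induction p using Polynomial.induction_on' with
  | add p q hp hq => simp only [map_add, add_mul, mul_add, hp, hq]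
  | monomial n c =>
    simp only [aeval_monomial]
    rw [mul_assoc, hpow n, ← mul_assoc, Algebra.commutes c X, mul_assoc]

private lemma stmt9_sqrt_intertwine (a b X : H →L[ℂ] H) (ha : 0 ≤ a) (hb : 0 ≤ b)
    (h : b * X = X * a) : cfc Real.sqrt b * X = X * cfc Real.sqrt a := by
  obtain hsub | hnt := subsingleton_or_nontrivial H
  · exact Subsingleton.elim _ _
  have hsa := ((ContinuousLinearMap.nonneg_iff_isPositive a).mp ha).isSelfAdjoint
  have hsb := ((ContinuousLinearMap.nonneg_iff_isPositive b).mp hb).isSelfAdjoint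
  set M : ℝ := max ‖a‖ ‖b‖ with hM
  have hcfc : ∀ ε : ℝ, 0 < ε → ∀ p : ℝ[X], (∀ x ∈ Set.Icc (0:ℝ) M, |p.eval x - Real.sqrt x| < ε) →
      ∀ c : H →L[ℂ] H, 0 ≤ c → ‖c‖ ≤ M → ‖cfc Real.sqrt c - aeval c p‖ ≤ ε := by
    intro ε hε p hp c hc hcM
    have hsc := ((ContinuousLinearMap.nonneg_iff_isPositive c).mp hc).isSelfAdjoint
    rw [← cfc_polynomial p c hsc, ← cfc_sub _ _ c Real.continuous_sqrt.continuousOn]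
    refine norm_cfc_le hε.le fun x hx => ?_
    have hx0 : 0 ≤ x := spectrum_nonneg_of_nonneg hc hx
    have hxM : x ≤ M := le_trans (le_trans (le_abs_self x) (spectrum.norm_le_norm_of_mem hx)) hcM
    have := hp x ⟨hx0, hxM⟩
    rw [Real.norm_eq_abs, abs_sub_comm]
    exact this.le
  have key : ∀ ε : ℝ, 0 < ε → ‖cfc Real.sqrt b * X - X * cfc Real.sqrt a‖ ≤ ε * (2 * ‖X‖) := by
    intro ε hε
    obtain ⟨p, hp⟩ := exists_polynomial_near_of_continuousOn 0 M Real.sqrt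
      Real.continuous_sqrt.continuousOn ε hε
    have ha' := hcfc ε hε p hp a ha (le_max_left _ _)
    have hb' := hcfc ε hε p hp b hb (le_max_right _ _)
    have hZ := stmt9_aeval_intertwine a b X h p
    have hrw : cfc Real.sqrt b * X - X * cfc Real.sqrt a =
        (cfc Real.sqrt b - aeval b p) * X + X * (aeval a p - cfc Real.sqrt a) := by
      rw [sub_mul, mul_sub, hZ]; abel
    rw [hrw]
    calc ‖(cfc Real.sqrt b - aeval b p) * X + X * (aeval a p - cfc Real.sqrt a)‖
        ≤ ‖(cfc Real.sqrt b - aeval b p) * X‖ + ‖X * (aeval a p - cfc Real.sqrt a)‖ :=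
          norm_add_le _ _
      _ ≤ ‖cfc Real.sqrt b - aeval b p‖ * ‖X‖ + ‖X‖ * ‖aeval a p - cfc Real.sqrt a‖ := by
          gcongr <;> exact norm_mul_le _ _
      _ ≤ ε * ‖X‖ + ‖X‖ * ε := by
          gcongr
          rw [norm_sub_rev]; exact ha'
      _ = ε * (2 * ‖X‖) := by ring
  have hnorm : ‖cfc Real.sqrt b * X - X * cfc Real.sqrt a‖ ≤ 0 := by
    by_contra h'
    push_neg at h'
    have hXpos : (0:ℝ) ≤ ‖X‖ := norm_nonneg _
    have h2 := key (‖cfc Real.sqrt b * X - X * cfc Real.sqrt a‖ / (2 * ‖X‖ + 1))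
      (by positivity)
    have hlt : ‖cfc Real.sqrt b * X - X * cfc Real.sqrt a‖ / (2 * ‖X‖ + 1) * (2 * ‖X‖) <
        ‖cfc Real.sqrt b * X - X * cfc Real.sqrt a‖ := by
      rw [div_mul_eq_mul_div, div_lt_iff₀ (by positivity)]
      nlinarith
    linarith
  rw [← sub_eq_zero]
  exact norm_le_zero_iff.mp hnorm

private lemma stmt9_cfc_sqrt_sq (a : H →L[ℂ] H) (ha : 0 ≤ a) :
    cfc Real.sqrt a * cfc Real.sqrt a = a := by
  have hsa := ((ContinuousLinearMap.nonneg_iff_isPositive a).mp ha).isSelfAdjoint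
  rw [← cfc_mul Real.sqrt Real.sqrt a]
  have h2 : cfc (fun x => Real.sqrt x * Real.sqrt x) a = cfc (id : ℝ → ℝ) a :=
    cfc_congr fun x hx => Real.mul_self_sqrt (spectrum_nonneg_of_nonneg ha hx)
  rw [h2]; exact cfc_id ℝ a

private lemma stmt9_cfc_sqrt_mul_self (a : H →L[ℂ] H) (ha : 0 ≤ a) :
    cfc Real.sqrt (a * a) = a := by
  have hsa := ((ContinuousLinearMap.nonneg_iff_isPositive a).mp ha).isSelfAdjoint
  have h1 : a * a = aeval a (X ^ 2 : ℝ[X]) := by simp [sq]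
  rw [h1, ← cfc_comp_polynomial (X ^ 2 : ℝ[X]) Real.sqrt a Real.continuous_sqrt.continuousOn hsa]
  have h2 : cfc (Real.sqrt <| eval · (X ^ 2 : ℝ[X])) a = cfc (id : ℝ → ℝ) a :=
    cfc_congr fun x hx => by
      simp [Real.sqrt_sq (spectrum_nonneg_of_nonneg ha hx)]
  rw [h2]; exact cfc_id ℝ a

/-- Mixed Schwarz inequality. -/
private lemma stmt9_mixed_schwarz (A S S' : H →L[ℂ] H) (hS : S.IsPositive) (hS' : S'.IsPositive)
    (hS2 : S * S = adjoint A * A) (hS'2 : S' * S' = A * adjoint A) (x y : H) :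
    ‖⟪A x, y⟫‖ ≤ Real.sqrt (re ⟪S x, x⟫) * Real.sqrt (re ⟪S' y, y⟫) := by
  have hSn : (0:H →L[ℂ] H) ≤ S := (ContinuousLinearMap.nonneg_iff_isPositive S).mpr hS
  have hS'n : (0:H →L[ℂ] H) ≤ S' := (ContinuousLinearMap.nonneg_iff_isPositive S').mpr hS'
  have hSSn : (0:H →L[ℂ] H) ≤ S * S := by
    rw [hS2, ContinuousLinearMap.nonneg_iff_isPositive]
    exact (isPositive_one (E := H) (𝕜 := ℂ)).adjoint_conj A
  have hS'S'n : (0:H →L[ℂ] H) ≤ S' * S' := by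
    rw [hS'2, ContinuousLinearMap.nonneg_iff_isPositive]
    exact (isPositive_one (E := H) (𝕜 := ℂ)).conj_adjoint A
  have h1 : (S' * S') * A = A * (S * S) := by rw [hS'2, hS2, mul_assoc]
  have interw1 : S' * A = A * S := by
    have := stmt9_sqrt_intertwine (S * S) (S' * S') A hSSn hS'S'n h1
    rwa [stmt9_cfc_sqrt_mul_self S hSn, stmt9_cfc_sqrt_mul_self S' hS'n] at this
  set s := cfc Real.sqrt S with hs
  set s' := cfc Real.sqrt S' with hs'
  have interw2 : s' * A = A * s := stmt9_sqrt_intertwine S S' A hSn hS'n interw1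
  have hssq : s * s = S := stmt9_cfc_sqrt_sq S hSn
  have hs'sq : s' * s' = S' := stmt9_cfc_sqrt_sq S' hS'n
  have hssa : IsSelfAdjoint s := cfc_predicate _ _
  have hs'sa : IsSelfAdjoint s' := cfc_predicate _ _
  have hsadj : adjoint s = s := hssa
  have hs'adj : adjoint s' = s' := hs'sa
  have hSapp : ∀ z, S z = s (s z) := fun z => by rw [← hssq]; rfl
  have hSadj : adjoint S = S := hS.isSelfAdjoint
  have hnorm : ∀ z, ‖A z‖ = ‖S z‖ := by
    intro z
    have e1 : ⟪adjoint A (A z), z⟫ = ⟪A z, A z⟫ := adjoint_inner_left A z (A z)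
    have e2 : ⟪adjoint S (S z), z⟫ = ⟪S z, S z⟫ := adjoint_inner_left S z (S z)
    rw [hSadj] at e2
    have happ : adjoint A (A z) = S (S z) := by
      have : (adjoint A * A) z = (S * S) z := by rw [← hS2]
      simpa [ContinuousLinearMap.mul_apply] using this
    have e3 : ⟪A z, A z⟫ = ⟪S z, S z⟫ := by rw [← e1, happ, e2]
    rw [norm_eq_sqrt_re_inner (𝕜 := ℂ) (A z), norm_eq_sqrt_re_inner (𝕜 := ℂ) (S z), e3]
  have hSx : ∀ z, Real.sqrt (re ⟪S z, z⟫) = ‖s z‖ := by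
    intro z
    have e2 : ⟪adjoint s (s z), z⟫ = ⟪s z, s z⟫ := adjoint_inner_left s z (s z)
    rw [hsadj] at e2
    have : re ⟪S z, z⟫ = ‖s z‖ ^ 2 := by
      rw [hSapp z, e2, inner_self_eq_norm_sq]
    rw [this, Real.sqrt_sq (norm_nonneg _)]
  have hS'app : ∀ z, S' z = s' (s' z) := fun z => by rw [← hs'sq]; rfl
  have hS'y : ∀ z, Real.sqrt (re ⟪S' z, z⟫) = ‖s' z‖ := by
    intro z
    have e2 : ⟪adjoint s' (s' z), z⟫ = ⟪s' z, s' z⟫ := adjoint_inner_left s' z (s' z)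
    rw [hs'adj] at e2
    have : re ⟪S' z, z⟫ = ‖s' z‖ ^ 2 := by
      rw [hS'app z, e2, inner_self_eq_norm_sq]
    rw [this, Real.sqrt_sq (norm_nonneg _)]
  rw [hSx x, hS'y y]
  set D : Submodule ℂ H := LinearMap.range (s : H →ₗ[ℂ] H) ⊔ LinearMap.ker (s : H →ₗ[ℂ] H) with hD
  have hdense : Dense (D : Set H) := by
    rw [Submodule.dense_iff_topologicalClosure_eq_top,
      Submodule.topologicalClosure_eq_top_iff]
    rw [Submodule.eq_bot_iff]
    intro v hv
    rw [Submodule.mem_orthogonal] at hv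
    have hsv : s v = 0 := by
      have h4 : ⟪s (s v), v⟫ = 0 := hv (s (s v)) (Submodule.mem_sup_left ⟨s v, rfl⟩)
      have h5 : ⟪adjoint s (s v), v⟫ = ⟪s v, s v⟫ := adjoint_inner_left s v (s v)
      rw [hsadj] at h5
      rw [h5] at h4
      exact inner_self_eq_zero.mp h4
    have hvD : v ∈ D := Submodule.mem_sup_right (LinearMap.mem_ker.mpr hsv)
    exact inner_self_eq_zero.mp (hv v hvD)
  have hclosed : IsClosed {z : H | ‖⟪A z, y⟫‖ ≤ ‖s z‖ * ‖s' y‖} := by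
    apply isClosed_le
    · exact (A.continuous.inner continuous_const).norm
    · exact (s.continuous.norm).mul continuous_const
  have hsubset : (D : Set H) ⊆ {z : H | ‖⟪A z, y⟫‖ ≤ ‖s z‖ * ‖s' y‖} := by
    intro z hz
    obtain ⟨u, hu, w, hw, rfl⟩ := Submodule.mem_sup.mp hz
    obtain ⟨w', rfl⟩ := hu
    rw [LinearMap.mem_ker, ContinuousLinearMap.coe_coe] at hw
    have hAw : A w = 0 := by
      have : ‖A w‖ = ‖S w‖ := hnorm w
      rw [hSapp w, hw, map_zero, norm_zero, norm_eq_zero] at this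
      exact this
    have hAsw : s' (A w') = A (s w') := by
      have : (s' * A) w' = (A * s) w' := by rw [interw2]
      simpa [ContinuousLinearMap.mul_apply] using this
    have hval : ⟪A (s w' + w), y⟫ = ⟪A w', s' y⟫ := by
      rw [map_add, hAw, add_zero, ← hAsw]
      have h6 : ⟪adjoint s' (A w'), y⟫ = ⟪A w', s' y⟫ := adjoint_inner_left s' y (A w')
      rw [hs'adj] at h6
      exact h6
    have hsz : s (s w' + w) = s (s w') := by rw [map_add, hw, add_zero]
    have hAw' : ‖A w'‖ = ‖s (s w' + w)‖ := by
      rw [hnorm w', hSapp w', hsz]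
    calc ‖⟪A (s w' + w), y⟫‖ = ‖⟪A w', s' y⟫‖ := by rw [hval]
      _ ≤ ‖A w'‖ * ‖s' y‖ := norm_inner_le_norm _ _
      _ = ‖s (s w' + w)‖ * ‖s' y‖ := by rw [hAw']
  exact hclosed.closure_subset_iff.mpr hsubset (hdense x)

private lemma stmt9_norm_add_le_half (A B SA SB SA' SB' : H →L[ℂ] H)
    (hSA : SA.IsPositive) (hSB : SB.IsPositive) (hSA' : SA'.IsPositive) (hSB' : SB'.IsPositive)
    (hA2 : SA * SA = adjoint A * A) (hA'2 : SA' * SA' = A * adjoint A)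
    (hB2 : SB * SB = adjoint B * B) (hB'2 : SB' * SB' = B * adjoint B) :
    ‖A + B‖ ≤ (‖SA + SB‖ + ‖SA' + SB'‖) / 2 := by
  set M₁ := ‖SA + SB‖ with hM₁
  set M₂ := ‖SA' + SB'‖ with hM₂
  have hM₁0 : 0 ≤ M₁ := norm_nonneg _
  have hM₂0 : 0 ≤ M₂ := norm_nonneg _
  set K := (M₁ + M₂) / 2 with hK
  have hK0 : 0 ≤ K := by positivity
  have key : ∀ x y : H, ‖⟪(A + B) x, y⟫‖ ≤ K * (‖x‖ * ‖y‖) := by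
    intro x y
    set a₁ := re ⟪SA x, x⟫ with ha₁
    set b₁ := re ⟪SB x, x⟫ with hb₁
    set a₂ := re ⟪SA' y, y⟫ with ha₂
    set b₂ := re ⟪SB' y, y⟫ with hb₂
    have ha₁0 : 0 ≤ a₁ := hSA.re_inner_nonneg_left x
    have hb₁0 : 0 ≤ b₁ := hSB.re_inner_nonneg_left x
    have ha₂0 : 0 ≤ a₂ := hSA'.re_inner_nonneg_left y
    have hb₂0 : 0 ≤ b₂ := hSB'.re_inner_nonneg_left y
    have h1 : ‖⟪(A + B) x, y⟫‖ ≤ Real.sqrt a₁ * Real.sqrt a₂ + Real.sqrt b₁ * Real.sqrt b₂ := by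
      have : (A + B) x = A x + B x := rfl
      rw [this, inner_add_left]
      refine (norm_add_le _ _).trans ?_
      exact add_le_add (stmt9_mixed_schwarz A SA SA' hSA hSA' hA2 hA'2 x y)
        (stmt9_mixed_schwarz B SB SB' hSB hSB' hB2 hB'2 x y)
    have h2 : Real.sqrt a₁ * Real.sqrt a₂ + Real.sqrt b₁ * Real.sqrt b₂ ≤
        Real.sqrt (a₁ + b₁) * Real.sqrt (a₂ + b₂) := by
      have hsum0 : 0 ≤ Real.sqrt a₁ * Real.sqrt a₂ + Real.sqrt b₁ * Real.sqrt b₂ := by positivity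
      have hsq : (Real.sqrt a₁ * Real.sqrt a₂ + Real.sqrt b₁ * Real.sqrt b₂) ^ 2 ≤
          (a₁ + b₁) * (a₂ + b₂) := by
        nlinarith [sq_nonneg (Real.sqrt a₁ * Real.sqrt b₂ - Real.sqrt b₁ * Real.sqrt a₂),
          Real.sq_sqrt ha₁0, Real.sq_sqrt hb₁0, Real.sq_sqrt ha₂0, Real.sq_sqrt hb₂0,
          mul_nonneg (mul_nonneg (Real.sqrt_nonneg a₁) (Real.sqrt_nonneg a₂))
            (mul_nonneg (Real.sqrt_nonneg b₁) (Real.sqrt_nonneg b₂))]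
      calc Real.sqrt a₁ * Real.sqrt a₂ + Real.sqrt b₁ * Real.sqrt b₂
          = Real.sqrt ((Real.sqrt a₁ * Real.sqrt a₂ + Real.sqrt b₁ * Real.sqrt b₂) ^ 2) :=
            (Real.sqrt_sq hsum0).symm
        _ ≤ Real.sqrt ((a₁ + b₁) * (a₂ + b₂)) := Real.sqrt_le_sqrt hsq
        _ = Real.sqrt (a₁ + b₁) * Real.sqrt (a₂ + b₂) :=
            Real.sqrt_mul (add_nonneg ha₁0 hb₁0) _
    have h3 : a₁ + b₁ ≤ M₁ * ‖x‖ ^ 2 := by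
      have e : a₁ + b₁ = re ⟪(SA + SB) x, x⟫ := by
        have : (SA + SB) x = SA x + SB x := rfl
        rw [this, inner_add_left, map_add]
      rw [e]
      refine (RCLike.re_le_norm _).trans ?_
      refine (norm_inner_le_norm _ _).trans ?_
      have := (SA + SB).le_opNorm x
      calc ‖(SA + SB) x‖ * ‖x‖ ≤ (M₁ * ‖x‖) * ‖x‖ := by gcongr
        _ = M₁ * ‖x‖ ^ 2 := by ring
    have h4 : a₂ + b₂ ≤ M₂ * ‖y‖ ^ 2 := by
      have e : a₂ + b₂ = re ⟪(SA' + SB') y, y⟫ := by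
        have : (SA' + SB') y = SA' y + SB' y := rfl
        rw [this, inner_add_left, map_add]
      rw [e]
      refine (RCLike.re_le_norm _).trans ?_
      refine (norm_inner_le_norm _ _).trans ?_
      have := (SA' + SB').le_opNorm y
      calc ‖(SA' + SB') y‖ * ‖y‖ ≤ (M₂ * ‖y‖) * ‖y‖ := by gcongr
        _ = M₂ * ‖y‖ ^ 2 := by ring
    have h5 : Real.sqrt (a₁ + b₁) ≤ Real.sqrt M₁ * ‖x‖ := by
      refine (Real.sqrt_le_sqrt h3).trans ?_
      rw [Real.sqrt_mul hM₁0, Real.sqrt_sq (norm_nonneg x)]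
    have h6 : Real.sqrt (a₂ + b₂) ≤ Real.sqrt M₂ * ‖y‖ := by
      refine (Real.sqrt_le_sqrt h4).trans ?_
      rw [Real.sqrt_mul hM₂0, Real.sqrt_sq (norm_nonneg y)]
    have h7 : Real.sqrt (a₁ + b₁) * Real.sqrt (a₂ + b₂) ≤
        (Real.sqrt M₁ * ‖x‖) * (Real.sqrt M₂ * ‖y‖) := by
      apply mul_le_mul h5 h6 (Real.sqrt_nonneg _) (by positivity)
    have h8 : (Real.sqrt M₁ * ‖x‖) * (Real.sqrt M₂ * ‖y‖) ≤ K * (‖x‖ * ‖y‖) := by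
      have hAM : Real.sqrt M₁ * Real.sqrt M₂ ≤ K := by
        rw [hK]
        nlinarith [sq_nonneg (Real.sqrt M₁ - Real.sqrt M₂), Real.sq_sqrt hM₁0,
          Real.sq_sqrt hM₂0]
      calc (Real.sqrt M₁ * ‖x‖) * (Real.sqrt M₂ * ‖y‖)
          = (Real.sqrt M₁ * Real.sqrt M₂) * (‖x‖ * ‖y‖) := by ring
        _ ≤ K * (‖x‖ * ‖y‖) := by
            apply mul_le_mul_of_nonneg_right hAM (by positivity)
    linarith
  refine opNorm_le_bound _ hK0 fun x => ?_
  rcases eq_or_lt_of_le (norm_nonneg ((A + B) x)) with h0 | h0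
  · rw [← h0]; positivity
  · have h2 : ‖(A + B) x‖ ^ 2 ≤ K * ‖x‖ * ‖(A + B) x‖ := by
      calc ‖(A + B) x‖ ^ 2 = re ⟪(A + B) x, (A + B) x⟫ := (inner_self_eq_norm_sq _).symm
        _ ≤ ‖⟪(A + B) x, (A + B) x⟫‖ := RCLike.re_le_norm _
        _ ≤ K * (‖x‖ * ‖(A + B) x‖) := key x ((A + B) x)
        _ = K * ‖x‖ * ‖(A + B) x‖ := by ring
    nlinarith

private lemma stmt9_norm_sqrt_eq (X S : H →L[ℂ] H) (hS : S.IsPositive)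
    (h : S * S = adjoint X * X) : ‖S‖ = ‖X‖ := by
  have hadj : adjoint S = S := hS.isSelfAdjoint
  have h1 : ‖S‖ * ‖S‖ = ‖S * S‖ := by
    rw [← norm_adjoint_comp_self S, hadj]; rfl
  have h2 : ‖S * S‖ = ‖X‖ * ‖X‖ := by
    rw [h, ← norm_adjoint_comp_self X]; rfl
  exact (mul_self_inj (norm_nonneg S) (norm_nonneg X)).mp (h1.trans h2)

private lemma stmt9_smul_pos (c : ℝ) (hc : 0 ≤ c) {S : H →L[ℂ] H} (hS : S.IsPositive) :
    ((c : ℂ) • S).IsPositive := by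
  rw [isPositive_def']
  constructor
  · have h := hS.isSelfAdjoint
    rw [isSelfAdjoint_iff, star_smul, RCLike.star_def, Complex.conj_ofReal, h]
  · intro x
    have : ((c : ℂ) • S).reApplyInnerSelf x = c * re ⟪S x, x⟫ := by
      simp only [reApplyInnerSelf_apply, ContinuousLinearMap.smul_apply, inner_smul_left]
      simp
    rw [this]
    exact mul_nonneg hc (hS.re_inner_nonneg_left x)

private lemma stmt9_smul_sq_left (c : ℝ) (S Y : H →L[ℂ] H) (h : S * S = adjoint Y * Y) :
    ((c : ℂ) • S) * ((c : ℂ) • S) = adjoint ((c : ℂ) • Y) * ((c : ℂ) • Y) := by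
  have hstar : star ((c : ℝ) : ℂ) = ((c : ℝ) : ℂ) := by simp
  rw [← star_eq_adjoint] at h ⊢
  rw [star_smul, hstar, smul_mul_smul_comm, smul_mul_smul_comm, h]

private lemma stmt9_smul_sq_right (c : ℝ) (S Y : H →L[ℂ] H) (h : S * S = Y * adjoint Y) :
    ((c : ℂ) • S) * ((c : ℂ) • S) = ((c : ℂ) • Y) * adjoint ((c : ℂ) • Y) := by
  have hstar : star ((c : ℝ) : ℂ) = ((c : ℝ) : ℂ) := by simp
  rw [← star_eq_adjoint] at h ⊢
  rw [star_smul, hstar, smul_mul_smul_comm, smul_mul_smul_comm, h]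

private lemma stmt9_norm_U_le (U : H →L[ℂ] H) (hUpar : U * adjoint U * U = U) : ‖U‖ ≤ 1 := by
  set Q := adjoint U * U with hQdef
  have hQsq : Q * Q = Q := by
    rw [hQdef, mul_assoc, ← mul_assoc U (adjoint U) U, hUpar]
  have hQadj : adjoint Q = Q := by
    rw [hQdef, ← star_eq_adjoint]
    exact IsSelfAdjoint.star_mul_self U
  have h1 : ‖Q‖ * ‖Q‖ = ‖Q‖ := by
    rw [← norm_adjoint_comp_self Q, hQadj]
    show ‖Q * Q‖ = ‖Q‖
    rw [hQsq]
  have h2 : ‖U‖ * ‖U‖ = ‖Q‖ := by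
    rw [hQdef, ← norm_adjoint_comp_self U]; rfl
  have hQ1 : ‖Q‖ ≤ 1 := by nlinarith [norm_nonneg Q]
  nlinarith [norm_nonneg U]

end AuxStmt9


open ContinuousLinearMap

/-- `‖M_λ(T)‖ ≤ (‖λ|T| + (1-λ)|T^D|‖ + ‖λ|T*| + (1-λ)|(T^D)*|‖)/2 ≤ λ‖T‖ + (1-λ)‖T^D‖`,
and the particular case `λ = 1/2` for the mean transform.  Here `R = |T|`, `P₁ = |T^D|`,
`P₂ = |T*|`, `P₃ = |(T^D)*|`, and the Duggal transform is `T^D = R * U`. -/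
theorem stmt9 {H : Type*} [NormedAddCommGroup H] [InnerProductSpace ℂ H] [CompleteSpace H]
    (T U R P₁ P₂ P₃ : H →L[ℂ] H)
    (hRpos : R.IsPositive) (hRsq : R * R = adjoint T * T)
    (hUpar : U * adjoint U * U = U)
    (hker : LinearMap.ker (U : H →ₗ[ℂ] H) = LinearMap.ker (T : H →ₗ[ℂ] H))
    (hTUR : T = U * R)
    (hP₁pos : P₁.IsPositive) (hP₁sq : P₁ * P₁ = adjoint (R * U) * (R * U))
    (hP₂pos : P₂.IsPositive) (hP₂sq : P₂ * P₂ = T * adjoint T)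
    (hP₃pos : P₃.IsPositive) (hP₃sq : P₃ * P₃ = (R * U) * adjoint (R * U))
    (l : ℝ) (hl : l ∈ Set.Icc (0 : ℝ) 1) :
    (‖(l : ℂ) • T + ((1 : ℂ) - (l : ℂ)) • (R * U)‖ ≤
        (‖(l : ℂ) • R + ((1 : ℂ) - (l : ℂ)) • P₁‖ +
         ‖(l : ℂ) • P₂ + ((1 : ℂ) - (l : ℂ)) • P₃‖) / 2 ∧
     (‖(l : ℂ) • R + ((1 : ℂ) - (l : ℂ)) • P₁‖ +
      ‖(l : ℂ) • P₂ + ((1 : ℂ) - (l : ℂ)) • P₃‖) / 2 ≤ l * ‖T‖ + (1 - l) * ‖R * U‖) ∧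
    (‖(2 : ℂ)⁻¹ • (T + R * U)‖ ≤ (‖R + P₁‖ + ‖P₂ + P₃‖) / 4 ∧
     (‖R + P₁‖ + ‖P₂ + P₃‖) / 4 ≤ ‖T‖) := by
  obtain ⟨hl0, hl1⟩ := hl
  have hm0 : (0:ℝ) ≤ 1 - l := by linarith
  have hcast : (1 : ℂ) - (l : ℂ) = (((1 - l : ℝ)) : ℂ) := by push_cast; ring
  have hRT : ‖R‖ = ‖T‖ := stmt9_norm_sqrt_eq T R hRpos hRsq
  have hP₁n : ‖P₁‖ = ‖R * U‖ := stmt9_norm_sqrt_eq (R * U) P₁ hP₁pos hP₁sq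
  have hP₂n : ‖P₂‖ = ‖T‖ := by
    have h' : P₂ * P₂ = adjoint (adjoint T) * (adjoint T) := by rw [adjoint_adjoint]; exact hP₂sq
    rw [stmt9_norm_sqrt_eq (adjoint T) P₂ hP₂pos h', ← star_eq_adjoint]
    exact norm_star T
  have hP₃n : ‖P₃‖ = ‖R * U‖ := by
    have h' : P₃ * P₃ = adjoint (adjoint (R * U)) * (adjoint (R * U)) := by
      rw [adjoint_adjoint]; exact hP₃sq
    rw [stmt9_norm_sqrt_eq (adjoint (R * U)) P₃ hP₃pos h', ← star_eq_adjoint]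
    exact norm_star _
  have hU1 : ‖U‖ ≤ 1 := stmt9_norm_U_le U hUpar
  have hRU : ‖R * U‖ ≤ ‖T‖ := by
    calc ‖R * U‖ ≤ ‖R‖ * ‖U‖ := norm_mul_le _ _
      _ ≤ ‖R‖ * 1 := mul_le_mul_of_nonneg_left hU1 (norm_nonneg R)
      _ = ‖T‖ := by rw [mul_one, hRT]
  have main1 : ‖(l:ℂ) • T + ((1 - l : ℝ):ℂ) • (R * U)‖ ≤
      (‖(l:ℂ) • R + ((1 - l : ℝ):ℂ) • P₁‖ + ‖(l:ℂ) • P₂ + ((1 - l : ℝ):ℂ) • P₃‖) / 2 :=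
    stmt9_norm_add_le_half ((l:ℂ) • T) (((1 - l : ℝ):ℂ) • (R * U)) ((l:ℂ) • R)
      (((1 - l : ℝ):ℂ) • P₁) ((l:ℂ) • P₂) (((1 - l : ℝ):ℂ) • P₃)
      (stmt9_smul_pos l hl0 hRpos) (stmt9_smul_pos _ hm0 hP₁pos)
      (stmt9_smul_pos l hl0 hP₂pos) (stmt9_smul_pos _ hm0 hP₃pos)
      (stmt9_smul_sq_left l R T hRsq) (stmt9_smul_sq_right l P₂ T hP₂sq)
      (stmt9_smul_sq_left (1 - l) P₁ (R * U) hP₁sq)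
      (stmt9_smul_sq_right (1 - l) P₃ (R * U) hP₃sq)
  have hnl : ∀ W : H →L[ℂ] H, ‖(l:ℂ) • W‖ = l * ‖W‖ := fun W => by
    rw [norm_smul, Complex.norm_real, Real.norm_eq_abs, abs_of_nonneg hl0]
  have hnm : ∀ W : H →L[ℂ] H, ‖((1 - l : ℝ):ℂ) • W‖ = (1 - l) * ‖W‖ := fun W => by
    rw [norm_smul, Complex.norm_real, Real.norm_eq_abs, abs_of_nonneg hm0]
  have tri1 : ‖(l:ℂ) • R + ((1 - l : ℝ):ℂ) • P₁‖ ≤ l * ‖T‖ + (1 - l) * ‖R * U‖ := by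
    refine (norm_add_le _ _).trans ?_
    rw [hnl, hnm, hRT, hP₁n]
  have tri2 : ‖(l:ℂ) • P₂ + ((1 - l : ℝ):ℂ) • P₃‖ ≤ l * ‖T‖ + (1 - l) * ‖R * U‖ := by
    refine (norm_add_le _ _).trans ?_
    rw [hnl, hnm, hP₂n, hP₃n]
  have main2 : ‖T + R * U‖ ≤ (‖R + P₁‖ + ‖P₂ + P₃‖) / 2 :=
    stmt9_norm_add_le_half T (R * U) R P₁ P₂ P₃ hRpos hP₁pos hP₂pos hP₃pos
      hRsq hP₂sq hP₁sq hP₃sq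
  have tri3 : ‖R + P₁‖ ≤ ‖T‖ + ‖R * U‖ := by
    refine (norm_add_le _ _).trans ?_
    rw [hRT, hP₁n]
  have tri4 : ‖P₂ + P₃‖ ≤ ‖T‖ + ‖R * U‖ := by
    refine (norm_add_le _ _).trans ?_
    rw [hP₂n, hP₃n]
  have h2inv : ‖(2:ℂ)⁻¹ • (T + R * U)‖ = ‖T + R * U‖ / 2 := by
    rw [norm_smul]; simp; ring
  refine ⟨⟨?_, ?_⟩, ?_, ?_⟩
  · rw [hcast]; exact main1
  · rw [hcast]; linarith [tri1, tri2]
  · rw [h2inv]; linarith [main2]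
  · linarith [tri3, tri4, hRU]
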